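/- Let G be a group and π : G → U(H) a unitary representation on a complex Hilbert space H. Then the following are equivalent: (a) there exist a finite subset K ⊆ G and ε > 0 such that for every ξ ∈ H, max_{g ∈ K} ‖π(g)ξ − ξ‖ ≥ ε‖ξ‖ (i.e. π has spectral gap); (b) there exists a finite nonempty subset K ⊆ G such that the operator norm of (1/|K|) ∑_{g ∈ K} π(g) is strictly less than 1. -/

import Mathlib

set_option maxHeartbeats 1000000

/-- Spectral gap for a unitary representation is equivalent to some finite average of the
unitaries having operator norm strictly less than 1. -/
theorem stmt0 {G : Type*} [Group G] {H : Type*} [NormedAddCommGroup H]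
    [InnerProductSpace ℂ H] [CompleteSpace H]
    (π : G →* unitary (H →L[ℂ] H)) :
    (∃ (K : Finset G) (ε : ℝ), 0 < ε ∧
        ∀ ξ : H, ∃ g ∈ K, ε * ‖ξ‖ ≤ ‖(π g : H →L[ℂ] H) ξ - ξ‖) ↔
      (∃ K : Finset G, K.Nonempty ∧
        ‖(K.card : ℝ)⁻¹ • ∑ g ∈ K, (π g : H →L[ℂ] H)‖ < 1) := by
  classical
  constructor
  · rintro ⟨K, ε, hε, hK⟩
    by_cases hsub : ∀ ξ : H, ξ = 0
    · refine ⟨{1}, Finset.singleton_nonempty _, ?_⟩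
      have h0 : ((({1} : Finset G).card : ℝ)⁻¹ • ∑ g ∈ ({1} : Finset G),
          (π g : H →L[ℂ] H)) = 0 := by
        ext ξ
        exact (hsub _).trans (hsub _).symm
      rw [h0, norm_zero]
      exact one_pos
    · push_neg at hsub
      obtain ⟨ξ₀, hξ₀⟩ := hsub
      -- the witness g for ξ₀ is not 1
      obtain ⟨g₀, hg₀K, hg₀⟩ := hK ξ₀
      have hg₀1 : g₀ ≠ 1 := by
        intro h
        rw [h] at hg₀
        simp only [map_one] at hg₀
        have : ((1 : unitary (H →L[ℂ] H)) : H →L[ℂ] H) ξ₀ - ξ₀ = 0 := by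
          rw [OneMemClass.coe_one, ContinuousLinearMap.one_apply, sub_self]
        rw [this] at hg₀
        simp only [norm_zero] at hg₀
        have := mul_pos hε (norm_pos_iff.mpr hξ₀)
        linarith
      set ε' := min ε 1 with hε'def
      have hε'pos : 0 < ε' := lt_min hε one_pos
      have hε'le : ε' ≤ 1 := min_le_right _ _
      have hε'ε : ε' ≤ ε := min_le_left _ _
      set K' := insert (1 : G) K with hK'def
      have h1K' : (1 : G) ∈ K' := Finset.mem_insert_self _ _
      have hg₀K' : g₀ ∈ K' := Finset.mem_insert_of_mem hg₀K
      set n := K'.card with hndef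
      have hn2 : 2 ≤ n := by
        have : ({1, g₀} : Finset G) ⊆ K' := by
          intro x hx
          rcases Finset.mem_insert.mp hx with h | h
          · rw [h]; exact h1K'
          · rw [Finset.mem_singleton.mp h]; exact hg₀K'
        have hcard : ({1, g₀} : Finset G).card = 2 := by
          rw [Finset.card_insert_of_notMem (by simpa using hg₀1.symm)]
          simp
        calc 2 = ({1, g₀} : Finset G).card := hcard.symm
          _ ≤ n := Finset.card_le_card this
      have hnpos : (0 : ℝ) < n := by positivity
      set c := Real.sqrt (4 - ε' ^ 2) with hcdef
      have hc0 : 0 ≤ c := Real.sqrt_nonneg _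
      have hclt : c < 2 := by
        have h4 : 4 - ε' ^ 2 < 4 := by nlinarith
        calc c < Real.sqrt 4 := by
                apply Real.sqrt_lt_sqrt _ h4
                nlinarith
          _ = 2 := by
                rw [show (4 : ℝ) = 2 ^ 2 by norm_num, Real.sqrt_sq (by norm_num)]
      refine ⟨K', ⟨1, h1K'⟩, ?_⟩
      set T := (n : ℝ)⁻¹ • ∑ g ∈ K', (π g : H →L[ℂ] H) with hTdef
      have hbound : ‖T‖ ≤ (c + ((n : ℝ) - 2)) / n := by
        apply ContinuousLinearMap.opNorm_le_bound
        · have h2n : (2 : ℝ) ≤ n := by exact_mod_cast hn2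
          apply div_nonneg _ (le_of_lt hnpos)
          linarith
        · intro ξ
          by_cases hξ : ξ = 0
          · simp [hξ]
          -- find g ∈ K with the gap
          obtain ⟨g, hgK, hg⟩ := hK ξ
          have hg' : ε' * ‖ξ‖ ≤ ‖(π g : H →L[ℂ] H) ξ - ξ‖ := by
            have := mul_le_mul_of_nonneg_right hε'ε (norm_nonneg ξ)
            linarith
          have hg1 : g ≠ 1 := by
            intro h
            rw [h] at hg'
            simp only [map_one] at hg'
            have : ((1 : unitary (H →L[ℂ] H)) : H →L[ℂ] H) ξ - ξ = 0 := by
              rw [OneMemClass.coe_one, ContinuousLinearMap.one_apply, sub_self]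
            rw [this] at hg'
            simp only [norm_zero] at hg'
            have := mul_pos hε'pos (norm_pos_iff.mpr hξ)
            linarith
          have hgK' : g ∈ K' := Finset.mem_insert_of_mem hgK
          -- norm of ξ + π g ξ
          have hpar : ‖ξ + (π g : H →L[ℂ] H) ξ‖ ≤ c * ‖ξ‖ := by
            have hpl := parallelogram_law_with_norm ℂ ξ ((π g : H →L[ℂ] H) ξ)
            have hnm : ‖(π g : H →L[ℂ] H) ξ‖ = ‖ξ‖ := Unitary.norm_map (π g) ξ
            have hsub' : ‖ξ - (π g : H →L[ℂ] H) ξ‖ = ‖(π g : H →L[ℂ] H) ξ - ξ‖ :=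
              norm_sub_rev _ _
            have hsq : ‖ξ + (π g : H →L[ℂ] H) ξ‖ ^ 2 ≤ (4 - ε' ^ 2) * ‖ξ‖ ^ 2 := by
              have h1 : ε' * ‖ξ‖ ≤ ‖ξ - (π g : H →L[ℂ] H) ξ‖ := by rw [hsub']; exact hg'
              have h2 : (ε' * ‖ξ‖) ^ 2 ≤ ‖ξ - (π g : H →L[ℂ] H) ξ‖ ^ 2 := by
                apply sq_le_sq' _ h1
                nlinarith [norm_nonneg ξ]
              rw [hnm] at hpl
              have hpl' : ‖ξ + (π g : H →L[ℂ] H) ξ‖ ^ 2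
                  + ‖ξ - (π g : H →L[ℂ] H) ξ‖ ^ 2 = 4 * ‖ξ‖ ^ 2 := by
                rw [pow_two, pow_two, pow_two]
                linarith
              nlinarith [hpl', h2, mul_pow ε' ‖ξ‖ 2]
            calc ‖ξ + (π g : H →L[ℂ] H) ξ‖
                = Real.sqrt (‖ξ + (π g : H →L[ℂ] H) ξ‖ ^ 2) := by
                  rw [Real.sqrt_sq (norm_nonneg _)]
              _ ≤ Real.sqrt ((4 - ε' ^ 2) * ‖ξ‖ ^ 2) := Real.sqrt_le_sqrt hsq
              _ = c * ‖ξ‖ := by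
                  rw [Real.sqrt_mul (by nlinarith), Real.sqrt_sq (norm_nonneg _)]
          -- decompose the sum
          set f : G → H := fun h => (π h : H →L[ℂ] H) ξ with hfdef
          have hgKe : g ∈ K'.erase 1 := Finset.mem_erase.mpr ⟨hg1, hgK'⟩
          have hsum : ∑ h ∈ K', f h
              = f 1 + (f g + ∑ h ∈ (K'.erase 1).erase g, f h) := by
            rw [Finset.add_sum_erase _ f hgKe, Finset.add_sum_erase _ f h1K']
          have hf1 : f 1 = ξ := by
            rw [hfdef]
            simp only [map_one, OneMemClass.coe_one, ContinuousLinearMap.one_apply]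
          have hcard2 : (((K'.erase 1).erase g).card : ℝ) = (n : ℝ) - 2 := by
            rw [Finset.card_erase_of_mem hgKe, Finset.card_erase_of_mem h1K']
            rw [Nat.cast_sub (by omega), Nat.cast_sub (by omega), ← hndef]
            ring
          have hrest : ‖∑ h ∈ (K'.erase 1).erase g, f h‖ ≤ ((n : ℝ) - 2) * ‖ξ‖ := by
            calc ‖∑ h ∈ (K'.erase 1).erase g, f h‖
                ≤ ∑ h ∈ (K'.erase 1).erase g, ‖f h‖ := norm_sum_le _ _
              _ = ∑ h ∈ (K'.erase 1).erase g, ‖ξ‖ := by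
                  apply Finset.sum_congr rfl
                  intro h _
                  exact Unitary.norm_map (π h) ξ
              _ = (((K'.erase 1).erase g).card : ℝ) * ‖ξ‖ := by
                  rw [Finset.sum_const, nsmul_eq_mul]
              _ = ((n : ℝ) - 2) * ‖ξ‖ := by rw [hcard2]
          have hS : ‖∑ h ∈ K', f h‖ ≤ (c + ((n : ℝ) - 2)) * ‖ξ‖ := by
            rw [hsum, hf1, ← add_assoc]
            calc ‖(ξ + f g) + ∑ h ∈ (K'.erase 1).erase g, f h‖
                ≤ ‖ξ + f g‖ + ‖∑ h ∈ (K'.erase 1).erase g, f h‖ := norm_add_le _ _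
              _ ≤ c * ‖ξ‖ + ((n : ℝ) - 2) * ‖ξ‖ := add_le_add hpar hrest
              _ = (c + ((n : ℝ) - 2)) * ‖ξ‖ := by ring
          have hTξ : T ξ = (n : ℝ)⁻¹ • ∑ h ∈ K', f h := by
            simp [hTdef, hfdef, ContinuousLinearMap.sum_apply]
          rw [hTξ, norm_smul]
          calc ‖(n : ℝ)⁻¹‖ * ‖∑ h ∈ K', f h‖
              = (n : ℝ)⁻¹ * ‖∑ h ∈ K', f h‖ := by
                rw [norm_inv, Real.norm_natCast]
            _ ≤ (n : ℝ)⁻¹ * ((c + ((n : ℝ) - 2)) * ‖ξ‖) := by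
                apply mul_le_mul_of_nonneg_left hS
                positivity
            _ = (c + ((n : ℝ) - 2)) / n * ‖ξ‖ := by ring
      have hlt : (c + ((n : ℝ) - 2)) / n < 1 := by
        rw [div_lt_one hnpos]
        linarith
      exact lt_of_le_of_lt hbound hlt
  · rintro ⟨K, hKne, hT⟩
    set T := (K.card : ℝ)⁻¹ • ∑ g ∈ K, (π g : H →L[ℂ] H) with hTdef
    refine ⟨K, 1 - ‖T‖, by linarith, ?_⟩
    intro ξ
    by_contra hcon
    push_neg at hcon
    have hnpos : (0 : ℝ) < K.card := by
      exact_mod_cast Finset.card_pos.mpr hKne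
    have hTξ : ξ - T ξ = (K.card : ℝ)⁻¹ • ∑ g ∈ K, (ξ - (π g : H →L[ℂ] H) ξ) := by
      rw [Finset.sum_sub_distrib, smul_sub, Finset.sum_const, hTdef]
      simp only [ContinuousLinearMap.smul_apply, ContinuousLinearMap.sum_apply]
      rw [← Nat.cast_smul_eq_nsmul ℝ, smul_smul, inv_mul_cancel₀ (ne_of_gt hnpos), one_smul]
    have hub : ‖ξ - T ξ‖ < (1 - ‖T‖) * ‖ξ‖ := by
      rw [hTξ, norm_smul, norm_inv, Real.norm_natCast]
      have hsumlt : ∑ g ∈ K, ‖ξ - (π g : H →L[ℂ] H) ξ‖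
          < ∑ g ∈ K, (1 - ‖T‖) * ‖ξ‖ := by
        apply Finset.sum_lt_sum_of_nonempty hKne
        intro g hg
        rw [norm_sub_rev]
        exact hcon g hg
      calc (K.card : ℝ)⁻¹ * ‖∑ g ∈ K, (ξ - (π g : H →L[ℂ] H) ξ)‖
          ≤ (K.card : ℝ)⁻¹ * ∑ g ∈ K, ‖ξ - (π g : H →L[ℂ] H) ξ‖ := by
            apply mul_le_mul_of_nonneg_left (norm_sum_le _ _)
            positivity
        _ < (K.card : ℝ)⁻¹ * ∑ g ∈ K, (1 - ‖T‖) * ‖ξ‖ := by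
            apply mul_lt_mul_of_pos_left hsumlt
            positivity
        _ = (1 - ‖T‖) * ‖ξ‖ := by
            rw [Finset.sum_const, nsmul_eq_mul]
            field_simp
    have hlb : (1 - ‖T‖) * ‖ξ‖ ≤ ‖ξ - T ξ‖ := by
      have h1 : ‖T ξ‖ ≤ ‖T‖ * ‖ξ‖ := T.le_opNorm ξ
      have h2 : ‖ξ‖ - ‖T ξ‖ ≤ ‖ξ - T ξ‖ := norm_sub_norm_le _ _
      nlinarith [norm_nonneg ξ]
    linarith
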